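/- Let X be a compact metric space, M : X → X continuous, and s : ℕ → X → ℝ a sequence of continuous functions with 0 ≤ s_n ≤ n, subadditive along M (s_{n+m}(c) ≤ s_n(c) + s_m(M^n c)), and taking integer values. Then there exists a configuration c ∈ X with s_n(c) ≥ α n for all n, where α = inf_n sup_c s_n(c)/n. In particular sup_c liminf s_n(c)/n = inf_n sup_c s_n(c)/n, and the supremum is attained. -/

import Mathlib

open Filter

/-- Combinatorial record lemma for integer-valued subadditive-type sequences. -/
lemma exists_record_aux (u : ℕ → ℝ) (α : ℝ) (huint : ∀ n, ∃ z : ℤ, u n = z)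
    (h1 : ∀ n, u n ≤ n) (hα0 : 0 ≤ α) (hαu : ∀ n, α * n ≤ u n)
    (K N₀ : ℕ) (hK : 1 ≤ K) :
    ∃ N, N₀ ≤ N ∧ K ≤ N ∧ ∀ k, 1 ≤ k → k ≤ K → α * k ≤ u N - u (N - k) := by
  by_contra hcon
  push_neg at hcon
  set B : ℕ := max N₀ K with hB
  have H : ∀ N, B ≤ N → ∃ k, 1 ≤ k ∧ k ≤ K ∧ u N - u (N - k) < α * k := by
    intro N hN
    obtain ⟨k, hk1, hk2, hk3⟩ := hcon N (le_trans (le_max_left _ _) hN)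
      (le_trans (le_max_right _ _) hN)
    exact ⟨k, hk1, hk2, hk3⟩
  -- the minimal gap δ
  have hne : (Finset.Icc 1 K).Nonempty := ⟨1, by simp [hK]⟩
  set δ : ℝ := Finset.inf' (Finset.Icc 1 K) hne
      (fun k => α * k + 1 - (⌈α * (k : ℝ)⌉ : ℝ)) with hδ
  have hδpos : 0 < δ := by
    rw [hδ, Finset.lt_inf'_iff]
    intro k _
    have := Int.ceil_lt_add_one (α * (k : ℝ))
    linarith
  have hδle : ∀ k, 1 ≤ k → k ≤ K → δ ≤ α * k + 1 - (⌈α * (k : ℝ)⌉ : ℝ) := by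
    intro k hk1 hk2
    exact Finset.inf'_le _ (by simp [hk1, hk2])
  clear_value δ
  set g : ℕ → ℝ := fun n => u n - α * n with hg
  have hgdef : ∀ n : ℕ, g n = u n - α * n := fun n => rfl
  clear_value g
  have hstep : ∀ N, B ≤ N → ∃ k, 1 ≤ k ∧ k ≤ K ∧ g N + δ ≤ g (N - k) := by
    intro N hN
    obtain ⟨k, hk1, hk2, hk3⟩ := H N hN
    refine ⟨k, hk1, hk2, ?_⟩
    obtain ⟨z, hz⟩ := huint N
    obtain ⟨z', hz'⟩ := huint (N - k)
    have hkN : k ≤ N := hk2.trans ((le_max_right N₀ K).trans hN)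
    have hcast : ((N - k : ℕ) : ℝ) = (N : ℝ) - (k : ℝ) := by
      push_cast [Nat.cast_sub hkN]; ring
    -- u N - u (N-k) is an integer < α * k, hence ≤ ⌈α k⌉ - 1
    have hzz : ((z - z' : ℤ) : ℝ) < α * k := by push_cast; rw [← hz, ← hz']; exact hk3
    have hceil : (z - z' : ℤ) + 1 ≤ ⌈α * (k : ℝ)⌉ := Int.add_one_le_of_lt (Int.lt_ceil.2 hzz)
    have hceilR : ((z - z' : ℤ) : ℝ) + 1 ≤ (⌈α * (k : ℝ)⌉ : ℝ) := by
      exact_mod_cast hceil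
    have hub : u N - u (N - k) ≤ α * k - δ := by
      have := hδle k hk1 hk2
      rw [hz, hz']
      push_cast at hceilR ⊢
      linarith
    rw [hgdef, hgdef, hcast]
    linarith
  -- descent: from any N we reach below B gaining δ per ≤ K steps
  have descent : ∀ N, ∃ m, m < B ∧ g N + δ * ((N : ℝ) - (m : ℝ)) / K ≤ g m := by
    intro N
    induction N using Nat.strong_induction_on with
    | _ N ih =>
      rcases lt_or_ge N B with hNB | hNB
      · exact ⟨N, hNB, by simp⟩
      · obtain ⟨k, hk1, hk2, hk3⟩ := hstep N hNB
        have hkN : k ≤ N := hk2.trans ((le_max_right N₀ K).trans hNB)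
        have hlt : N - k < N := Nat.sub_lt (lt_of_lt_of_le (lt_of_lt_of_le Nat.zero_lt_one hK)
          ((le_max_right N₀ K).trans hNB)) hk1
        obtain ⟨m, hm1, hm2⟩ := ih (N - k) hlt
        refine ⟨m, hm1, ?_⟩
        have hcast : ((N - k : ℕ) : ℝ) = (N : ℝ) - (k : ℝ) := by
          push_cast [Nat.cast_sub hkN]; ring
        have hK0 : (0 : ℝ) < K := by exact_mod_cast hK
        have hkK : δ * (k : ℝ) / K ≤ δ := by
          rw [div_le_iff₀ hK0]
          have : (k : ℝ) ≤ K := by exact_mod_cast hk2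
          nlinarith
        have : g N + δ * ((N : ℝ) - (m : ℝ)) / K
            = g N + δ * (k : ℝ) / K + δ * (((N - k : ℕ) : ℝ) - (m : ℝ)) / K := by
          rw [hcast]; ring
        rw [this]
        calc g N + δ * (k : ℝ) / K + δ * (((N - k : ℕ) : ℝ) - (m : ℝ)) / K
            ≤ g N + δ + δ * (((N - k : ℕ) : ℝ) - (m : ℝ)) / K := by linarith
          _ ≤ g (N - k) + δ * (((N - k : ℕ) : ℝ) - (m : ℝ)) / K := by linarith
          _ ≤ g m := hm2
  -- contradiction for large N
  have hK0 : (0 : ℝ) < K := by exact_mod_cast hK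
  obtain ⟨N, hN⟩ := exists_nat_ge ((B : ℝ) + ((B : ℝ) * K + K) / δ)
  obtain ⟨m, hm1, hm2⟩ := descent N
  have hgN : 0 ≤ g N := by rw [hgdef]; linarith [hαu N]
  have hgm : g m ≤ B := by
    have h1' := h1 m
    have hm' : (m : ℝ) ≤ B := by exact_mod_cast hm1.le
    have : 0 ≤ α * m := mul_nonneg hα0 (Nat.cast_nonneg m)
    rw [hgdef]; linarith
  have hNm : (N : ℝ) - (m : ℝ) ≥ ((B : ℝ) * K + K) / δ := by
    have hm' : (m : ℝ) ≤ B := by exact_mod_cast hm1.le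
    linarith
  have : δ * ((N : ℝ) - (m : ℝ)) / K ≤ B := by linarith
  have hgt : (B : ℝ) * K + K ≤ δ * ((N : ℝ) - (m : ℝ)) := by
    rw [ge_iff_le, div_le_iff₀ hδpos] at hNm
    nlinarith
  rw [div_le_iff₀ hK0] at this
  nlinarith

theorem exists_config_of_maximal_speed
    {X : Type*} [MetricSpace X] [CompactSpace X] [Nonempty X]
    (M : X → X) (hM : Continuous M)
    (s : ℕ → X → ℝ) (hcont : ∀ n, Continuous (s n))
    (hint : ∀ n c, ∃ z : ℤ, s n c = z)
    (h0 : ∀ n c, 0 ≤ s n c) (h1 : ∀ n c, s n c ≤ n)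
    (hsub : ∀ n m c, s (n + m) c ≤ s n c + s m (M^[n] c))
    (α : ℝ) (hα : α = ⨅ n : {m : ℕ // 1 ≤ m}, ⨆ c : X, s n.1 c / (n.1 : ℝ)) :
    ∃ c : X, (∀ n : ℕ, α * n ≤ s n c) ∧
      Filter.liminf (fun n : ℕ => s n c / n) Filter.atTop = α ∧
      (⨆ c' : X, Filter.liminf (fun n : ℕ => s n c' / n) Filter.atTop) = α := by
  classical
  -- the maximum function u
  have hbdd : ∀ n, BddAbove (Set.range (s n)) := fun n =>
    ⟨n, by rintro _ ⟨c, rfl⟩; exact h1 n c⟩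
  set u : ℕ → ℝ := fun n => ⨆ c, s n c with hu
  have hmax : ∀ n, ∃ cm : X, u n = s n cm ∧ ∀ c, s n c ≤ s n cm := by
    intro n
    obtain ⟨cm, -, hcm⟩ := isCompact_univ.exists_isMaxOn Set.univ_nonempty
      (hcont n).continuousOn
    refine ⟨cm, le_antisymm (ciSup_le fun c => hcm (Set.mem_univ c))
      (le_ciSup (hbdd n) cm), fun c => hcm (Set.mem_univ c)⟩
  have hsle : ∀ n c, s n c ≤ u n := fun n c => le_ciSup (hbdd n) c
  have huint : ∀ n, ∃ z : ℤ, u n = z := by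
    intro n; obtain ⟨cm, hcm, -⟩ := hmax n
    obtain ⟨z, hz⟩ := hint n cm; exact ⟨z, by rw [hcm, hz]⟩
  have hu0 : ∀ n, 0 ≤ u n := fun n =>
    (h0 n (Classical.arbitrary X)).trans (hsle n _)
  have hu1 : ∀ n, u n ≤ n := fun n => ciSup_le (h1 n)
  -- boundedness of the normalized sups
  have hratio01 : ∀ (n : ℕ) (c : X), 0 ≤ s n c / n ∧ s n c / n ≤ 1 := by
    intro n c
    rcases Nat.eq_zero_or_pos n with rfl | hn
    · simp
    · have hn' : (0 : ℝ) < n := by exact_mod_cast hn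
      exact ⟨div_nonneg (h0 n c) hn'.le,
        (div_le_one hn').2 ((h1 n c))⟩
  have hsupbdd : ∀ n : {m : ℕ // 1 ≤ m}, BddAbove (Set.range fun c : X => s n.1 c / (n.1 : ℝ)) :=
    fun n => ⟨1, by rintro _ ⟨c, rfl⟩; exact (hratio01 n.1 c).2⟩
  have hsup0 : ∀ n : {m : ℕ // 1 ≤ m}, 0 ≤ ⨆ c : X, s n.1 c / (n.1 : ℝ) := fun n =>
    le_trans (hratio01 n.1 (Classical.arbitrary X)).1 (le_ciSup (hsupbdd n) _)
  have hα0 : 0 ≤ α := by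
    rw [hα]; exact le_ciInf hsup0
  have hαu : ∀ n, α * n ≤ u n := by
    intro n
    rcases Nat.eq_zero_or_pos n with rfl | hn
    · simpa using hu0 0
    have hn' : (0 : ℝ) < n := by exact_mod_cast hn
    have h1' : α ≤ ⨆ c : X, s n c / (n : ℝ) := by
      rw [hα]
      have hbb : BddBelow (Set.range fun n : {m : ℕ // 1 ≤ m} =>
          ⨆ c : X, s n.1 c / (n.1 : ℝ)) := ⟨0, by rintro _ ⟨m, rfl⟩; exact hsup0 m⟩
      exact ciInf_le hbb ⟨n, hn⟩
    have h2' : (⨆ c : X, s n c / (n : ℝ)) ≤ u n / n :=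
      ciSup_le fun c => by gcongr; exact hsle n c
    calc α * n ≤ (u n / n) * n := by
          apply mul_le_mul_of_nonneg_right (h1'.trans h2') hn'.le
      _ = u n := by field_simp
  -- the key configuration family
  have key : ∀ K : ℕ, ∃ c : X, ∀ k, 1 ≤ k → k ≤ K → α * k ≤ s k c := by
    intro K
    rcases Nat.eq_zero_or_pos K with rfl | hK
    · exact ⟨Classical.arbitrary X, fun k hk1 hk2 => absurd (hk1.trans hk2) (by omega)⟩
    obtain ⟨N, -, hKN, hN⟩ := exists_record_aux u α huint hu1 hα0 hαu K K hK
    obtain ⟨cm, hcm, -⟩ := hmax N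
    refine ⟨cm, fun k hk1 hk2 => ?_⟩
    have hkN : k ≤ N := hk2.trans hKN
    have hdecomp : s N cm ≤ s k cm + s (N - k) (M^[k] cm) := by
      have := hsub k (N - k) cm
      rwa [Nat.add_sub_cancel' hkN] at this
    have := hN k hk1 hk2
    have h2' := hsle (N - k) (M^[k] cm)
    rw [hcm] at *
    linarith
  choose x hx using key
  obtain ⟨c, φ, hφ, hconv⟩ := CompactSpace.tendsto_subseq x
  have hc : ∀ k : ℕ, 1 ≤ k → α * k ≤ s k c := by
    intro k hk
    have htend : Filter.Tendsto (fun j => s k (x (φ j))) Filter.atTop (nhds (s k c)) :=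
      ((hcont k).tendsto c).comp hconv
    refine ge_of_tendsto htend ?_
    filter_upwards [Filter.eventually_ge_atTop k] with j hj
    exact hx (φ j) k hk (hj.trans hφ.le_apply)
  have hcall : ∀ n : ℕ, α * n ≤ s n c := by
    intro n
    rcases Nat.eq_zero_or_pos n with rfl | hn
    · simpa using h0 0 c
    · exact hc n hn
  -- liminf ≤ α for every configuration
  have hbddliminf : ∀ c' : X, Filter.IsBoundedUnder (· ≥ ·) Filter.atTop
      (fun n : ℕ => s n c' / n) :=
    fun c' => Filter.isBoundedUnder_of ⟨0, fun n => (hratio01 n c').1⟩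
  have hliminf_le : ∀ c' : X,
      Filter.liminf (fun n : ℕ => s n c' / n) Filter.atTop ≤ α := by
    intro c'
    rw [hα]
    apply le_ciInf
    rintro ⟨m, hm⟩
    have hm' : (0 : ℝ) < m := by exact_mod_cast hm
    -- iterate subadditivity
    have hiter : ∀ j : ℕ, s (m * j) c' ≤ j * u m := by
      intro j
      induction j with
      | zero => simpa using h1 0 c'
      | succ j ih =>
        have := hsub (m * j) m c'
        have h2' := hsle m (M^[m * j] c')
        have : s (m * j + m) c' ≤ j * u m + u m := by linarith
        calc s (m * (j + 1)) c' = s (m * j + m) c' := by ring_nf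
          _ ≤ j * u m + u m := this
          _ = (j + 1 : ℕ) * u m := by push_cast; ring
    set φm : ℕ → ℕ := fun j => m * (j + 1) with hφm
    have hφm_tendsto : Filter.Tendsto φm Filter.atTop Filter.atTop := by
      apply tendsto_atTop_mono (fun j => ?_) tendsto_id
      have := Nat.le_mul_of_pos_left (j+1) hm
      simp only [hφm, id_eq]
      omega
    have hmap : Filter.liminf (fun n : ℕ => s n c' / n) Filter.atTop ≤
        Filter.liminf (fun j : ℕ => s (φm j) c' / (φm j)) Filter.atTop := by
      have h := Filter.liminf_le_liminf_of_le (u := fun n : ℕ => s n c' / n)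
        (f := Filter.atTop) (g := Filter.map φm Filter.atTop)
        hφm_tendsto (hbddliminf c')
        (Filter.IsBoundedUnder.isCoboundedUnder_ge
          ⟨1, by
            simp only [Filter.eventually_map]
            exact Filter.Eventually.of_forall fun j => (hratio01 (φm j) c').2⟩)
      simp only [Filter.liminf, Filter.map_map] at h ⊢
      exact h
    refine hmap.trans ?_
    apply Filter.liminf_le_of_le
      (Filter.isBoundedUnder_of ⟨0, fun j => (hratio01 (φm j) c').1⟩)
    intro b hb
    obtain ⟨j, hj⟩ := hb.exists
    refine hj.trans ?_
    have hiter' := hiter (j + 1)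
    have hφpos : (0 : ℝ) < (φm j : ℝ) := by
      have : 0 < φm j := Nat.mul_pos hm (Nat.succ_pos j)
      exact_mod_cast this
    have hstep2 : s (φm j) c' / (φm j : ℝ) ≤ u m / m := by
      rw [div_le_div_iff₀ hφpos hm']
      have hcast : (φm j : ℝ) = m * (j + 1 : ℝ) := by push_cast [hφm]; ring
      calc s (φm j) c' * m ≤ ((j + 1 : ℕ) * u m) * m := by
            apply mul_le_mul_of_nonneg_right _ (by positivity)
            simpa [hφm] using hiter'
        _ = u m * (φm j) := by rw [hcast]; push_cast; ring
    refine hstep2.trans ?_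
    obtain ⟨cm, hcm, -⟩ := hmax m
    rw [hcm]
    exact le_ciSup (hsupbdd ⟨m, hm⟩) cm
  -- liminf at c equals α
  have hgec : α ≤ Filter.liminf (fun n : ℕ => s n c / n) Filter.atTop := by
    apply Filter.le_liminf_of_le
      (Filter.IsBoundedUnder.isCoboundedUnder_ge
        (Filter.isBoundedUnder_of ⟨1, fun n => (hratio01 n c).2⟩))
    filter_upwards [Filter.eventually_ge_atTop 1] with n hn
    have hn' : (0 : ℝ) < n := by exact_mod_cast hn
    rw [le_div_iff₀ hn']
    exact hcall n
  have hlimc : Filter.liminf (fun n : ℕ => s n c / n) Filter.atTop = α :=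
    le_antisymm (hliminf_le c) hgec
  refine ⟨c, hcall, hlimc, ?_⟩
  apply le_antisymm (ciSup_le hliminf_le)
  calc α = Filter.liminf (fun n : ℕ => s n c / n) Filter.atTop := hlimc.symm
    _ ≤ ⨆ c' : X, Filter.liminf (fun n : ℕ => s n c' / n) Filter.atTop :=
      le_ciSup ⟨α, by rintro _ ⟨c', rfl⟩; exact hliminf_le c'⟩ c
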